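/- Let G be a finite simple connected graph rooted at r ∈ V(G), and let w_1, …, w_T be weight functions of tree strategies of G rooted at r such that Σ_{t=1}^T w_t(v) ≥ T for every vertex v ∈ V(G)\{r}. Then π(G, r) ≤ ⌊ẑ/T⌋ + 1, where ẑ = Σ_{t=1}^T Σ_{v∈V(G)\{r}} w_t(v). -/
import Mathlib


open Finset

/-- A single pebbling move on graph `G`: remove two pebbles from a vertex `u` and
place one pebble on a vertex `v` adjacent to `u`. -/
def IsPebblingMove {V : Type*} (G : SimpleGraph V) (C C' : V → ℕ) : Prop :=
  ∃ u v, G.Adj u v ∧ 2 ≤ C u ∧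
    C' u = C u - 2 ∧ C' v = C v + 1 ∧ ∀ w, w ≠ u → w ≠ v → C' w = C w

/-- A configuration `C` is `r`-solvable if some sequence of pebbling moves starting
from `C` places at least one pebble on `r`. -/
def Solvable {V : Type*} (G : SimpleGraph V) (r : V) (C : V → ℕ) : Prop :=
  ∃ C', Relation.ReflTransGen (IsPebblingMove G) C C' ∧ 1 ≤ C' r

/-- The rooted pebbling number `π(G, r)`: the smallest `k` such that every
configuration of size `k` is `r`-solvable. -/
noncomputable def pebblingNumber {V : Type*} [Fintype V] (G : SimpleGraph V) (r : V) : ℕ :=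
  sInf {k : ℕ | ∀ C : V → ℕ, (∑ v, C v) = k → Solvable G r C}

/-- A tree strategy of `G` rooted at `r`: a subtree of `G` containing `r` (encoded by its
vertex set and parent map) together with an associated nonnegative weight function. -/
structure TreeStrategy {V : Type*} (G : SimpleGraph V) (r : V) where
  /-- the vertices of the subtree -/
  verts : Set V
  /-- the parent map of the subtree (towards the root) -/
  parent : V → V
  root_mem : r ∈ verts
  parent_mem : ∀ v ∈ verts, v ≠ r → parent v ∈ verts
  parent_adj : ∀ v ∈ verts, v ≠ r → G.Adj (parent v) v
  reaches_root : ∀ v ∈ verts, ∃ n : ℕ, parent^[n] v = r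
  /-- the weight function -/
  weight : V → ℝ
  weight_nonneg : ∀ v, 0 ≤ weight v
  weight_root : weight r = 0
  weight_parent : ∀ v ∈ verts, v ≠ r → ¬ G.Adj v r → 2 * weight v ≤ weight (parent v)
  weight_zero : ∀ v ∉ verts, weight v = 0

lemma solvable_of_move {V : Type*} {G : SimpleGraph V} {r : V} {C C' : V → ℕ}
    (h : IsPebblingMove G C C') (hs : Solvable G r C') : Solvable G r C := by
  obtain ⟨D, hD, hr⟩ := hs
  exact ⟨D, Relation.ReflTransGen.head h hD, hr⟩

lemma weight_lemma {V : Type*} [Fintype V] [DecidableEq V] {G : SimpleGraph V} {r : V}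
    (S : TreeStrategy G r) :
    ∀ n (C : V → ℕ), (∑ v, C v) = n → ¬ Solvable G r C →
      ∑ v, S.weight v * C v ≤ ∑ v ∈ Finset.univ.erase r, S.weight v := by
  intro n
  induction n using Nat.strong_induction_on with
  | _ n ih =>
  intro C hn hns
  by_cases hex : ∃ u ∈ S.verts, u ≠ r ∧ 2 ≤ C u
  · obtain ⟨u, hu, hur, hC2⟩ := hex
    by_cases hadj : G.Adj u r
    · exfalso
      apply hns
      refine ⟨Function.update (Function.update C u (C u - 2)) r (C r + 1),
        Relation.ReflTransGen.single ⟨u, r, hadj, hC2, ?_, ?_, ?_⟩, ?_⟩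
      · rw [Function.update_of_ne hur, Function.update_self]
      · rw [Function.update_self]
      · intro w hwu hwr
        rw [Function.update_of_ne hwr, Function.update_of_ne hwu]
      · rw [Function.update_self]; omega
    · set p := S.parent u with hp
      have hpu : G.Adj p u := S.parent_adj u hu hur
      have hpne : p ≠ u := hpu.ne
      have hw : 2 * S.weight u ≤ S.weight p := S.weight_parent u hu hur hadj
      set C' := Function.update (Function.update C u (C u - 2)) p (C p + 1) with hC'
      have hCu : C' u = C u - 2 := by
        rw [hC', Function.update_of_ne (Ne.symm hpne), Function.update_self]
      have hCp : C' p = C p + 1 := by rw [hC', Function.update_self]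
      have hCo : ∀ w, w ≠ u → w ≠ p → C' w = C w := by
        intro w hwu hwp
        rw [hC', Function.update_of_ne hwp, Function.update_of_ne hwu]
      have hmove : IsPebblingMove G C C' := ⟨u, p, hpu.symm, hC2, hCu, hCp, hCo⟩
      have hns' : ¬ Solvable G r C' := fun hs => hns (solvable_of_move hmove hs)
      have hsum : ∑ v, C' v = n - 1 ∧ 1 ≤ n := by
        have e1 : ∑ v, C' v = C' u + (C' p + ∑ v ∈ (univ.erase u).erase p, C' v) := by
          rw [Finset.add_sum_erase _ C' (Finset.mem_erase.mpr ⟨hpne, mem_univ p⟩),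
            Finset.add_sum_erase _ C' (mem_univ u)]
        have e2 : ∑ v, C v = C u + (C p + ∑ v ∈ (univ.erase u).erase p, C v) := by
          rw [Finset.add_sum_erase _ C (Finset.mem_erase.mpr ⟨hpne, mem_univ p⟩),
            Finset.add_sum_erase _ C (mem_univ u)]
        have e3 : ∑ v ∈ (univ.erase u).erase p, C' v = ∑ v ∈ (univ.erase u).erase p, C v := by
          apply Finset.sum_congr rfl
          intro v hv
          simp only [Finset.mem_erase] at hv
          exact hCo v hv.2.1 hv.1
        rw [e1, e3, hCu, hCp]
        rw [e2] at hn
        omega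
      have hrec := ih (n - 1) (by omega) C' hsum.1 hns'
      have hwsum : ∑ v, S.weight v * (C v : ℝ) ≤ ∑ v, S.weight v * (C' v : ℝ) := by
        have e1 : ∑ v, S.weight v * (C' v : ℝ) =
            S.weight u * (C' u : ℝ) + (S.weight p * (C' p : ℝ) +
              ∑ v ∈ (univ.erase u).erase p, S.weight v * (C' v : ℝ)) := by
          rw [Finset.add_sum_erase _ (fun v => S.weight v * (C' v : ℝ))
              (Finset.mem_erase.mpr ⟨hpne, mem_univ p⟩),
            Finset.add_sum_erase _ (fun v => S.weight v * (C' v : ℝ)) (mem_univ u)]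
        have e2 : ∑ v, S.weight v * (C v : ℝ) =
            S.weight u * (C u : ℝ) + (S.weight p * (C p : ℝ) +
              ∑ v ∈ (univ.erase u).erase p, S.weight v * (C v : ℝ)) := by
          rw [Finset.add_sum_erase _ (fun v => S.weight v * (C v : ℝ))
              (Finset.mem_erase.mpr ⟨hpne, mem_univ p⟩),
            Finset.add_sum_erase _ (fun v => S.weight v * (C v : ℝ)) (mem_univ u)]
        have e3 : ∑ v ∈ (univ.erase u).erase p, S.weight v * (C' v : ℝ)
            = ∑ v ∈ (univ.erase u).erase p, S.weight v * (C v : ℝ) := by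
          apply Finset.sum_congr rfl
          intro v hv
          simp only [Finset.mem_erase] at hv
          rw [hCo v hv.2.1 hv.1]
        rw [e1, e2, e3, hCu, hCp]
        have hcast : (↑(C u - 2) : ℝ) = (C u : ℝ) - 2 := by
          have : ((C u - 2 : ℕ) : ℝ) = ((C u : ℕ) : ℝ) - ((2:ℕ) : ℝ) :=
            Nat.cast_sub hC2
          simpa using this
        push_cast [hcast]
        nlinarith [S.weight_nonneg u, S.weight_nonneg p]
      exact hwsum.trans hrec
  · push_neg at hex
    have hr0 : C r = 0 := by
      by_contra h
      exact hns ⟨C, Relation.ReflTransGen.refl, by omega⟩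
    have : ∑ v, S.weight v * (C v : ℝ) = ∑ v ∈ univ.erase r, S.weight v * (C v : ℝ) := by
      rw [← Finset.add_sum_erase _ (fun v => S.weight v * (C v : ℝ)) (mem_univ r),
        S.weight_root]
      ring
    rw [this]
    apply Finset.sum_le_sum
    intro v hv
    have hvr : v ≠ r := (Finset.mem_erase.mp hv).1
    by_cases hvm : v ∈ S.verts
    · have hC1 : C v ≤ 1 := by have := hex v hvm hvr; omega
      calc S.weight v * (C v : ℝ) ≤ S.weight v * 1 := by
            apply mul_le_mul_of_nonneg_left _ (S.weight_nonneg v)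
            exact_mod_cast hC1
        _ = S.weight v := mul_one _
    · rw [S.weight_zero v hvm]
      simp

/-- If `w_1, …, w_T` are weight functions of tree strategies of `G` rooted at `r` with
`Σ_t w_t(v) ≥ T` for every `v ≠ r`, then `π(G, r) ≤ ⌊ẑ/T⌋ + 1` where
`ẑ = Σ_t Σ_{v ≠ r} w_t(v)`. -/
theorem pebbling_le_floor_avg_weight {V : Type*} [Fintype V] [DecidableEq V]
    (G : SimpleGraph V) (hG : G.Connected) (r : V)
    (T : ℕ) (hT : 0 < T) (S : Fin T → TreeStrategy G r)
    (hcov : ∀ v, v ≠ r → (T : ℝ) ≤ ∑ t : Fin T, (S t).weight v) :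
    pebblingNumber G r ≤
      ⌊(∑ t : Fin T, ∑ v ∈ Finset.univ.erase r, (S t).weight v) / (T : ℝ)⌋₊ + 1 := by
  set z := ∑ t : Fin T, ∑ v ∈ Finset.univ.erase r, (S t).weight v with hz
  set N := ⌊z / (T : ℝ)⌋₊ + 1 with hN
  apply Nat.sInf_le
  intro C hC
  by_contra hns
  have hr0 : C r = 0 := by
    by_contra h
    exact hns ⟨C, Relation.ReflTransGen.refl, by omega⟩
  have hbound : ∀ t : Fin T, ∑ v, (S t).weight v * (C v : ℝ) ≤
      ∑ v ∈ Finset.univ.erase r, (S t).weight v :=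
    fun t => weight_lemma (S t) (∑ v, C v) C rfl hns
  have hsum : ∑ t : Fin T, ∑ v, (S t).weight v * (C v : ℝ) ≤ z :=
    Finset.sum_le_sum fun t _ => hbound t
  have hswap : ∑ t : Fin T, ∑ v, (S t).weight v * (C v : ℝ)
      = ∑ v, (∑ t : Fin T, (S t).weight v) * (C v : ℝ) := by
    rw [Finset.sum_comm]
    exact Finset.sum_congr rfl fun v _ => (Finset.sum_mul _ _ _).symm
  have hlow : (T : ℝ) * N ≤ ∑ v, (∑ t : Fin T, (S t).weight v) * (C v : ℝ) := by
    have e1 : ∑ v, (∑ t : Fin T, (S t).weight v) * (C v : ℝ)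
        = ∑ v ∈ univ.erase r, (∑ t : Fin T, (S t).weight v) * (C v : ℝ) := by
      rw [← Finset.add_sum_erase _ (fun v => (∑ t : Fin T, (S t).weight v) * (C v : ℝ))
        (mem_univ r), hr0]
      simp
    have e2 : (T : ℝ) * N = ∑ v ∈ univ.erase r, (T : ℝ) * (C v : ℝ) := by
      rw [← Finset.mul_sum]
      congr 1
      rw [← Nat.cast_sum]
      norm_cast
      rw [← hC, ← Finset.add_sum_erase _ C (mem_univ r), hr0, zero_add]
    rw [e1, e2]
    apply Finset.sum_le_sum
    intro v hv
    have hvr : v ≠ r := (Finset.mem_erase.mp hv).1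
    exact mul_le_mul_of_nonneg_right (hcov v hvr) (Nat.cast_nonneg _)
  have hfinal : (T : ℝ) * N ≤ z := hlow.trans (hswap ▸ hsum)
  have hTpos : (0 : ℝ) < T := by exact_mod_cast hT
  have hNle : (N : ℝ) ≤ z / T := by
    rw [le_div_iff₀ hTpos]
    linarith [hfinal]
  have : N ≤ ⌊z / (T : ℝ)⌋₊ := Nat.le_floor hNle
  omega
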